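/- With f, g, F, Γ, φ as in the previous construction (Γ(|φ'|) = F(φ), φ' < 0, φ(t) → ∞ as t → 0⁺), one has |φ'(t)|/φ(t) → ∞ as t → 0⁺. -/

import Mathlib

open MeasureTheory Filter intervalIntegral

lemma aux_mul_tendsto_zero (h : ℝ → ℝ) (hpos : ∀ s, 1 ≤ s → 0 < h s)
    (hanti : AntitoneOn h (Set.Ici 1)) (hint : IntegrableOn h (Set.Ici 1)) :
    Tendsto (fun s => s * h s) atTop (nhds 0) := by
  have hIoi : IntegrableOn h (Set.Ioi 1) := hint.mono_set Set.Ioi_subset_Ici_self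
  have hJ : Tendsto (fun s => ∫ x in (1:ℝ)..s, h x) atTop
      (nhds (∫ x in Set.Ioi 1, h x)) :=
    intervalIntegral_tendsto_integral_Ioi 1 hIoi tendsto_id
  have hJ2 : Tendsto (fun s => ∫ x in (1:ℝ)..(s/2), h x) atTop
      (nhds (∫ x in Set.Ioi 1, h x)) :=
    hJ.comp (tendsto_id.atTop_div_const (by norm_num))
  have hdiff : Tendsto (fun s => (∫ x in (1:ℝ)..s, h x) - ∫ x in (1:ℝ)..(s/2), h x)
      atTop (nhds 0) := by
    simpa using hJ.sub hJ2
  have hii : ∀ a b : ℝ, 1 ≤ a → a ≤ b → IntervalIntegrable h volume a b := by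
    intro a b ha hab
    apply (hint.mono_set ?_).intervalIntegrable
    rw [Set.uIcc_of_le hab]
    exact fun x hx => le_trans ha hx.1
  have key : ∀ s : ℝ, 2 ≤ s → s / 2 * h s ≤
      (∫ x in (1:ℝ)..s, h x) - ∫ x in (1:ℝ)..(s/2), h x := by
    intro s hs
    have h1 : (1:ℝ) ≤ s / 2 := by linarith
    have h2 : s / 2 ≤ s := by linarith
    have heq : (∫ x in (1:ℝ)..s, h x) - (∫ x in (1:ℝ)..(s/2), h x)
        = ∫ x in (s/2)..s, h x :=
      integral_interval_sub_left (hii 1 s le_rfl (by linarith))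
        (hii 1 (s/2) le_rfl h1)
    rw [heq]
    have hb : ∫ x in (s/2)..s, h s ≤ ∫ x in (s/2)..s, h x := by
      apply intervalIntegral.integral_mono_on h2 intervalIntegrable_const
        (hii (s/2) s h1 h2)
      intro x hx
      exact hanti (Set.mem_Ici.mpr (le_trans h1 hx.1)) (Set.mem_Ici.mpr (by linarith)) hx.2
    have hc : ∫ x in (s/2)..s, h s = (s - s/2) * h s := by
      simp [intervalIntegral.integral_const, smul_eq_mul]
    rw [hc] at hb
    have : s - s/2 = s/2 := by ring
    rw [this] at hb
    exact hb
  have half : Tendsto (fun s => s / 2 * h s) atTop (nhds 0) := by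
    apply squeeze_zero' ?_ (Eventually.mono (eventually_ge_atTop 2) key) hdiff
    filter_upwards [eventually_ge_atTop 2] with s hs
    exact le_of_lt (mul_pos (by linarith) (hpos s (by linarith)))
  have : Tendsto (fun s => 2 * (s / 2 * h s)) atTop (nhds 0) := by
    simpa using half.const_mul 2
  apply this.congr
  intro s; ring

/-- With `φ` as constructed (`Γ(|φ'|) = F(φ)`, `φ' < 0`, `φ(t) → ∞` as
`t → 0⁺`), one has `|φ' t| / φ t → ∞` as `t → 0⁺`. -/
theorem stmt_17 (f g : ℝ → ℝ) (N : ℝ) (hN : 1 ≤ N)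
    (hfc : ContinuousOn f (Set.Ici 0)) (hgc : ContinuousOn g (Set.Ici 0))
    (hfmono : StrictMonoOn f (Set.Ici 0)) (hgmono : StrictMonoOn g (Set.Ici 0))
    (hf0 : f 0 = 0) (hg0 : g 0 = 0)
    (hfpos : ∀ s, 0 < s → 0 < f s) (hgpos : ∀ s, 0 < s → 0 < g s)
    (F Γ Γinv : ℝ → ℝ)
    (hF : ∀ t, F t = ∫ s in (0:ℝ)..t, f s)
    (hΓ : ∀ s, Γ s = (∫ t in (0:ℝ)..(2 * s), g t) + 2 * N * s ^ 2)
    (hΓinv : ∀ s, 0 ≤ s → 0 ≤ Γinv s ∧ Γ (Γinv s) = s)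
    (hint : IntegrableOn (fun s => 1 / Γinv (F s)) (Set.Ici 1))
    (T : ℝ) (hT : 0 < T) (φ φ' : ℝ → ℝ)
    (hφpos : ∀ t ∈ Set.Ioc 0 T, 0 < φ t)
    (hφ'neg : ∀ t ∈ Set.Ioc 0 T, φ' t < 0)
    (hrel : ∀ t ∈ Set.Ioc 0 T, Γ (|φ' t|) = F (φ t))
    (hblow : Tendsto φ (nhdsWithin 0 (Set.Ioi 0)) atTop) :
    Tendsto (fun t => |φ' t| / φ t) (nhdsWithin 0 (Set.Ioi 0)) atTop := by
  -- nonnegativity of f and g on [0,∞)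
  have hg0' : ∀ x, 0 ≤ x → 0 ≤ g x := by
    intro x hx
    rcases eq_or_lt_of_le hx with h | h
    · simp [← h, hg0]
    · exact le_of_lt (hgpos x h)
  have hf0' : ∀ x, 0 ≤ x → 0 ≤ f x := by
    intro x hx
    rcases eq_or_lt_of_le hx with h | h
    · simp [← h, hf0]
    · exact le_of_lt (hfpos x h)
  -- interval integrability of g on nonneg intervals
  have hgii : ∀ a b : ℝ, 0 ≤ a → a ≤ b → IntervalIntegrable g volume a b := by
    intro a b ha hab
    apply ContinuousOn.intervalIntegrable
    apply hgc.mono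
    rw [Set.uIcc_of_le hab]
    exact fun x hx => le_trans ha hx.1
  have hfii : ∀ a b : ℝ, 0 ≤ a → a ≤ b → IntervalIntegrable f volume a b := by
    intro a b ha hab
    apply ContinuousOn.intervalIntegrable
    apply hfc.mono
    rw [Set.uIcc_of_le hab]
    exact fun x hx => le_trans ha hx.1
  -- Γ is strictly monotone on [0, ∞)
  have hΓmono : StrictMonoOn Γ (Set.Ici 0) := by
    intro a ha b hb hab
    rw [hΓ a, hΓ b]
    have ha' : (0:ℝ) ≤ a := ha
    have hsplit : (∫ t in (0:ℝ)..(2*b), g t) - (∫ t in (0:ℝ)..(2*a), g t)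
        = ∫ t in (2*a)..(2*b), g t :=
      integral_interval_sub_left (hgii 0 (2*b) le_rfl (by linarith)) (hgii 0 (2*a) le_rfl (by linarith))
    have hpos2 : 0 ≤ ∫ t in (2*a)..(2*b), g t := by
      apply intervalIntegral.integral_nonneg (by linarith)
      intro u hu
      exact hg0' u (by linarith [hu.1])
    have hsq : 2 * N * a ^ 2 < 2 * N * b ^ 2 := by
      have : a ^ 2 < b ^ 2 := by nlinarith
      nlinarith
    linarith [hsplit ▸ hpos2]
  have hΓ0 : Γ 0 = 0 := by
    rw [hΓ 0]; simp
  -- F is positive for s > 0 and monotone on [0,∞)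
  have hFpos : ∀ s : ℝ, 0 < s → 0 < F s := by
    intro s hs
    rw [hF s]
    apply intervalIntegral.intervalIntegral_pos_of_pos_on (hfii 0 s le_rfl (le_of_lt hs))
      (fun x hx => hfpos x hx.1) hs
  have hFmono : ∀ a b : ℝ, 0 ≤ a → a ≤ b → F a ≤ F b := by
    intro a b ha hab
    rw [hF a, hF b]
    have hsplit : (∫ t in (0:ℝ)..b, f t) - (∫ t in (0:ℝ)..a, f t)
        = ∫ t in a..b, f t :=
      integral_interval_sub_left (hfii 0 b le_rfl (le_trans ha hab)) (hfii 0 a le_rfl ha)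
    have : 0 ≤ ∫ t in a..b, f t := by
      apply intervalIntegral.integral_nonneg hab
      intro u hu
      exact hf0' u (le_trans ha hu.1)
    linarith [hsplit ▸ this]
  -- G := Γinv ∘ F : positive and monotone for s > 0
  set G : ℝ → ℝ := fun s => Γinv (F s) with hG
  have hGpos : ∀ s : ℝ, 0 < s → 0 < G s := by
    intro s hs
    have hFs := hFpos s hs
    obtain ⟨h1, h2⟩ := hΓinv (F s) (le_of_lt hFs)
    rcases eq_or_lt_of_le h1 with h | h
    · exfalso
      rw [← h] at h2
      rw [hΓ0] at h2
      linarith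
    · exact h
  have hGmono : ∀ a b : ℝ, 0 < a → a ≤ b → G a ≤ G b := by
    intro a b ha hab
    obtain ⟨ha1, ha2⟩ := hΓinv (F a) (le_of_lt (hFpos a ha))
    obtain ⟨hb1, hb2⟩ := hΓinv (F b) (le_of_lt (hFpos b (lt_of_lt_of_le ha hab)))
    by_contra hcon
    push_neg at hcon
    have := hΓmono hb1 ha1 hcon
    rw [ha2, hb2] at this
    exact absurd (hFmono a b (le_of_lt ha) hab) (not_le.mpr this)
  -- apply the key lemma to h = 1/G
  have hkey : Tendsto (fun s => s * (1 / G s)) atTop (nhds 0) := by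
    apply aux_mul_tendsto_zero _ ?_ ?_ hint
    · intro s hs
      exact one_div_pos.mpr (hGpos s (by linarith))
    · intro a ha b hb hab
      apply one_div_le_one_div_of_le (hGpos a (by linarith [Set.mem_Ici.mp ha]))
      exact hGmono a b (by linarith [Set.mem_Ici.mp ha]) hab
  -- hence G s / s → ∞
  have hGdiv : Tendsto (fun s => G s / s) atTop atTop := by
    have h1 : Tendsto (fun s => s * (1 / G s)) atTop (nhdsWithin 0 (Set.Ioi 0)) := by
      apply tendsto_nhdsWithin_of_tendsto_nhds_of_eventually_within _ hkey
      filter_upwards [eventually_ge_atTop 1] with s hs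
      exact Set.mem_Ioi.mpr (mul_pos (by linarith) (one_div_pos.mpr (hGpos s (by linarith))))
    have h2 := h1.inv_tendsto_nhdsGT_zero
    apply h2.congr'
    filter_upwards [eventually_ge_atTop 1] with s hs
    have hGs := hGpos s (by linarith)
    show (s * (1 / G s))⁻¹ = G s / s
    field_simp
  -- compose with φ
  have hcomp : Tendsto (fun t => G (φ t) / φ t) (nhdsWithin 0 (Set.Ioi 0)) atTop :=
    hGdiv.comp hblow
  apply hcomp.congr'
  filter_upwards [Ioc_mem_nhdsGT_of_mem ⟨le_refl 0, hT⟩] with t ht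
  -- show G (φ t) = |φ' t|
  have hφt := hφpos t ht
  obtain ⟨h1, h2⟩ := hΓinv (F (φ t)) (le_of_lt (hFpos _ hφt))
  have habs : (0:ℝ) ≤ |φ' t| := abs_nonneg _
  have : Γ (G (φ t)) = Γ (|φ' t|) := by rw [h2, hrel t ht]
  have heq : G (φ t) = |φ' t| :=
    hΓmono.injOn (Set.mem_Ici.mpr h1) (Set.mem_Ici.mpr habs) this
  show G (φ t) / φ t = |φ' t| / φ t
  rw [heq]
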